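/- Let f be a homogeneous polynomial of degree n in the variables X_1,…,X_d over ℂ and let U be a d×d unitary matrix. Then for every natural number k, both T_{f∘U} and T_f map the (finite-dimensional) space H_k of homogeneous polynomials of degree k in X_1,…,X_d into itself, and the characteristic polynomial of the restriction of T_{f∘U} to H_k equals the characteristic polynomial of the restriction of T_f to H_k. (This is the invariance of the spectrum of f f† under linear optics, Theorem 1 of the paper, in the Bargmann representation.) -/

import Mathlib

open MvPolynomial

/-- The differential operator `∂^α = ∏ i, (∂/∂Xᵢ)^(α i)` acting on polynomials. -/
noncomputable def partialPow {d : ℕ} (α : Fin d →₀ ℕ) :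
    Module.End ℂ (MvPolynomial (Fin d) ℂ) :=
  (List.ofFn fun i : Fin d =>
    ((pderiv i).toLinearMap ^ (α i) : Module.End ℂ (MvPolynomial (Fin d) ℂ))).prod

/-- The annihilation operator `f̄(∂) : g ↦ Σ_α conj(c_α) ∂^α g`. -/
noncomputable def annOp {d : ℕ} (f : MvPolynomial (Fin d) ℂ) :
    Module.End ℂ (MvPolynomial (Fin d) ℂ) :=
  ∑ α ∈ f.support, (starRingEnd ℂ) (coeff α f) • partialPow α

/-- `T_f : g ↦ f̄(∂)(f·g)`, the Bargmann representation of `f(a) f(a)†`. -/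
noncomputable def Tf {d : ℕ} (f : MvPolynomial (Fin d) ℂ) :
    Module.End ℂ (MvPolynomial (Fin d) ℂ) :=
  annOp f ∘ₗ LinearMap.mulLeft ℂ f

/-- The substitution `Xᵢ ↦ Σⱼ U i j • Xⱼ`, i.e. `f ∘ U`. -/
noncomputable def compU {d : ℕ} (U : Matrix (Fin d) (Fin d) ℂ) (f : MvPolynomial (Fin d) ℂ) :
    MvPolynomial (Fin d) ℂ :=
  aeval (fun i => ∑ j, U i j • (X j : MvPolynomial (Fin d) ℂ)) f

/-- The space of homogeneous polynomials of a fixed degree is finite dimensional. -/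
instance (d k : ℕ) : Module.Finite ℂ ↥(homogeneousSubmodule (Fin d) ℂ k) := by
  classical
  have hfin : {m : Fin d →₀ ℕ | m.degree = k}.Finite :=
    (Finsupp.finite_of_degree_le k).subset fun m hm => le_of_eq hm
  haveI : Finite ({m : Fin d →₀ ℕ | m.degree = k} : Set _) := hfin
  exact Module.Finite.equiv
    (((AddMonoidAlgebra.supportedEquivFinsupp _).symm).trans
      (LinearEquiv.ofEq _ _ (homogeneousSubmodule_eq_finsupp_supported (Fin d) ℂ k).symm))

/-! ### Auxiliary list-product lemmas -/

lemma ofFn_prod_eq_single {M : Type*} [Monoid M] :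
    ∀ {d : ℕ} (f : Fin d → M) (j : Fin d), (∀ i, i ≠ j → f i = 1) →
      (List.ofFn f).prod = f j := by
  intro d
  induction d with
  | zero => exact fun f j _ => j.elim0
  | succ d ih =>
    intro f j h
    rw [List.ofFn_succ, List.prod_cons]
    cases j using Fin.cases with
    | zero =>
      have : (List.ofFn fun i : Fin d => f i.succ).prod = 1 := by
        apply List.prod_eq_one
        intro x hx
        obtain ⟨i, rfl⟩ := List.mem_ofFn.mp hx
        exact h i.succ (Fin.succ_ne_zero i)
      rw [this, mul_one]
    | succ j' =>
      rw [h 0 (Fin.succ_ne_zero j').symm, one_mul]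
      exact ih _ j' fun i hi => h i.succ (by simpa [Fin.succ_inj] using hi)

lemma ofFn_prod_mul {M : Type*} [Monoid M] :
    ∀ {d : ℕ} (f g : Fin d → M), (∀ i j, Commute (f i) (g j)) →
      (List.ofFn fun i => f i * g i).prod = (List.ofFn f).prod * (List.ofFn g).prod := by
  intro d
  induction d with
  | zero => intro f g _; simp
  | succ d ih =>
    intro f g h
    simp only [List.ofFn_succ, List.prod_cons]
    rw [ih (fun i => f i.succ) (fun i => g i.succ) fun i j => h _ _]
    have hc : Commute (g 0) (List.ofFn fun i : Fin d => f i.succ).prod := by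
      apply Commute.list_prod_right
      intro x hx
      obtain ⟨i, rfl⟩ := List.mem_ofFn.mp hx
      exact (h i.succ 0).symm
    rw [mul_assoc, mul_assoc]
    congr 1
    rw [← mul_assoc, hc.eq, mul_assoc]

/-! ### `partialPow` and the operator-valued map `phi` -/

section Phi

variable {d : ℕ}

lemma pderiv_comm' (i j : Fin d) (p : MvPolynomial (Fin d) ℂ) :
    pderiv i (pderiv j p) = pderiv j (pderiv i p) := by
  induction p using MvPolynomial.induction_on with
  | C c => simp
  | add p q hp hq => simp [hp, hq]
  | mul_X p k ih =>
    have hXX : ∀ (a b c : Fin d), pderiv a (pderiv b (X c : MvPolynomial (Fin d) ℂ)) = 0 := by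
      intro a b c
      rcases eq_or_ne c b with rfl | h
      · simp [pderiv_X_self]
      · simp [pderiv_X_of_ne h]
    simp only [pderiv_mul, map_add, ih, hXX]
    ring

lemma commute_pderiv (i j : Fin d) :
    Commute ((pderiv i).toLinearMap : Module.End ℂ (MvPolynomial (Fin d) ℂ))
      (pderiv j).toLinearMap :=
  LinearMap.ext fun p => pderiv_comm' i j p

lemma partialPow_zero : partialPow (0 : Fin d →₀ ℕ) = 1 := by
  unfold partialPow
  apply List.prod_eq_one
  intro x hx
  obtain ⟨i, rfl⟩ := List.mem_ofFn.mp hx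
  simp

lemma partialPow_add (α β : Fin d →₀ ℕ) :
    partialPow (α + β) = partialPow α * partialPow β := by
  unfold partialPow
  simp only [Finsupp.add_apply, pow_add]
  exact ofFn_prod_mul _ _ fun i j => (commute_pderiv i j).pow_pow _ _

lemma partialPow_single (j : Fin d) :
    partialPow (Finsupp.single j 1) = (pderiv j).toLinearMap := by
  unfold partialPow
  rw [ofFn_prod_eq_single _ j fun i hi => by
    rw [Finsupp.single_eq_of_ne' hi.symm, pow_zero]]
  rw [Finsupp.single_eq_same, pow_one]

/-- Unconjugated version of `annOp`. -/
noncomputable def phi (p : MvPolynomial (Fin d) ℂ) : Module.End ℂ (MvPolynomial (Fin d) ℂ) :=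
  ∑ α ∈ p.support, coeff α p • partialPow α

lemma phi_sum_subset {p : MvPolynomial (Fin d) ℂ} {s : Finset (Fin d →₀ ℕ)}
    (h : p.support ⊆ s) : phi p = ∑ α ∈ s, coeff α p • partialPow α :=
  Finset.sum_subset h fun x _ hx => by
    rw [notMem_support_iff.mp hx, zero_smul]

lemma phi_monomial (α : Fin d →₀ ℕ) (c : ℂ) : phi (monomial α c) = c • partialPow α := by
  rcases eq_or_ne c 0 with rfl | hc
  · simp [phi]
  · rw [phi, support_monomial, if_neg hc, Finset.sum_singleton, coeff_monomial, if_pos rfl]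

lemma phi_add (p q : MvPolynomial (Fin d) ℂ) : phi (p + q) = phi p + phi q := by
  classical
  rw [phi_sum_subset (s := p.support ∪ q.support) support_add,
    phi_sum_subset (s := p.support ∪ q.support) Finset.subset_union_left,
    phi_sum_subset (s := p.support ∪ q.support) Finset.subset_union_right,
    ← Finset.sum_add_distrib]
  exact Finset.sum_congr rfl fun x _ => by rw [coeff_add, add_smul]

lemma phi_smul (c : ℂ) (p : MvPolynomial (Fin d) ℂ) : phi (c • p) = c • phi p := by
  rw [phi_sum_subset (s := p.support) support_smul, phi, Finset.smul_sum]
  exact Finset.sum_congr rfl fun x _ => by rw [coeff_smul, smul_eq_mul, mul_smul]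

lemma phi_mul (p q : MvPolynomial (Fin d) ℂ) : phi (p * q) = phi p * phi q := by
  induction p using MvPolynomial.induction_on' with
  | add p p' hp hp' => rw [add_mul, phi_add, phi_add, hp, hp', add_mul]
  | monomial α a =>
    induction q using MvPolynomial.induction_on' with
    | add q q' hq hq' => rw [mul_add, phi_add, phi_add, hq, hq', mul_add]
    | monomial β b =>
      rw [monomial_mul, phi_monomial, phi_monomial, phi_monomial, partialPow_add,
        smul_mul_smul_comm]

lemma phi_C (c : ℂ) : phi (C c : MvPolynomial (Fin d) ℂ) = c • 1 := by
  rw [show (C c : MvPolynomial (Fin d) ℂ) = monomial 0 c from rfl, phi_monomial, partialPow_zero]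

lemma phi_one : phi (1 : MvPolynomial (Fin d) ℂ) = 1 := by
  rw [show (1 : MvPolynomial (Fin d) ℂ) = C 1 from rfl, phi_C, one_smul]

lemma phi_X (j : Fin d) : phi (X j : MvPolynomial (Fin d) ℂ) = (pderiv j).toLinearMap := by
  rw [show (X j : MvPolynomial (Fin d) ℂ) = monomial (Finsupp.single j 1) 1 from rfl,
    phi_monomial, partialPow_single, one_smul]

lemma phi_pow_X (j : Fin d) (t : ℕ) :
    phi ((X j : MvPolynomial (Fin d) ℂ) ^ t) = (pderiv j).toLinearMap ^ t := by
  induction t with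
  | zero => simpa using phi_one
  | succ t ih => rw [pow_succ, phi_mul, ih, phi_X, pow_succ]

lemma phi_finset_sum {ι : Type*} (s : Finset ι) (f : ι → MvPolynomial (Fin d) ℂ) :
    phi (∑ x ∈ s, f x) = ∑ x ∈ s, phi (f x) := by
  classical
  induction s using Finset.induction with
  | empty => simp [phi]
  | insert _ _ hx ih => rw [Finset.sum_insert hx, Finset.sum_insert hx, phi_add, ih]

lemma annOp_eq_phi (f : MvPolynomial (Fin d) ℂ) :
    annOp f = phi (map (starRingEnd ℂ) f) := by
  rw [annOp, phi_sum_subset (support_map_subset _ _)]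
  exact Finset.sum_congr rfl fun α _ => by rw [coeff_map]

end Phi

/-! ### `compU` basic lemmas -/

section CompU

variable {d : ℕ} (A B : Matrix (Fin d) (Fin d) ℂ)

lemma compU_C (c : ℂ) : compU A (C c) = C c := by simp [compU]

lemma compU_add (p q : MvPolynomial (Fin d) ℂ) :
    compU A (p + q) = compU A p + compU A q := map_add _ _ _

lemma compU_mul (p q : MvPolynomial (Fin d) ℂ) :
    compU A (p * q) = compU A p * compU A q := map_mul _ _ _

lemma compU_smul (c : ℂ) (p : MvPolynomial (Fin d) ℂ) :
    compU A (c • p) = c • compU A p := map_smul (aeval _).toLinearMap _ _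

lemma compU_X (m : Fin d) : compU A (X m) = ∑ j, A m j • X j := aeval_X _ _

lemma compU_compU (g : MvPolynomial (Fin d) ℂ) :
    compU A (compU B g) = compU (B * A) g := by
  induction g using MvPolynomial.induction_on with
  | C c => rw [compU_C, compU_C, compU_C]
  | add p q hp hq => rw [compU_add, compU_add, compU_add, hp, hq]
  | mul_X p m ih =>
    rw [compU_mul, compU_mul, compU_mul, ih, compU_X, compU_X]
    congr 1
    rw [show compU A (∑ j, B m j • (X j : MvPolynomial (Fin d) ℂ))
      = ∑ j, compU A (B m j • (X j : MvPolynomial (Fin d) ℂ)) from map_sum (aeval _) _ _]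
    simp only [compU_smul, compU_X, Finset.smul_sum, smul_smul]
    rw [Finset.sum_comm]
    refine Finset.sum_congr rfl fun k _ => ?_
    rw [Matrix.mul_apply, Finset.sum_smul]

lemma compU_one (g : MvPolynomial (Fin d) ℂ) : compU 1 g = g := by
  have h : (fun i => ∑ j, (1 : Matrix (Fin d) (Fin d) ℂ) i j • (X j : MvPolynomial (Fin d) ℂ))
      = X := by
    funext i
    simp [Matrix.one_apply, ite_smul, Finset.sum_ite_eq]
  rw [compU, h, aeval_X_left_apply]

/-- `compU A` as a linear endomorphism. -/
noncomputable def CUlin : Module.End ℂ (MvPolynomial (Fin d) ℂ) :=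
  (aeval (fun i => ∑ j, A i j • (X j : MvPolynomial (Fin d) ℂ))).toLinearMap

lemma CUlin_apply (g : MvPolynomial (Fin d) ℂ) : CUlin A g = compU A g := rfl

lemma map_conj_compU (p : MvPolynomial (Fin d) ℂ) :
    map (starRingEnd ℂ) (compU A p)
      = compU (A.map (starRingEnd ℂ)) (map (starRingEnd ℂ) p) := by
  induction p using MvPolynomial.induction_on with
  | C c => rw [compU_C, map_C, compU_C]
  | add p q hp hq => rw [compU_add, map_add, map_add, compU_add, hp, hq]
  | mul_X p m ih =>
    rw [compU_mul, map_mul, map_mul, compU_mul, ih, map_X, compU_X, compU_X]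
    congr 1
    rw [map_sum]
    refine Finset.sum_congr rfl fun j _ => ?_
    rw [smul_eq_C_mul, map_mul, map_C, map_X, Matrix.map_apply, smul_eq_C_mul]

end CompU

/-! ### Homogeneity lemmas -/

section Homog

variable {d : ℕ}

lemma degree_eq_sum_univ (β : Fin d →₀ ℕ) : β.degree = ∑ j, β j := by
  rw [Finsupp.degree]
  exact Finset.sum_subset (Finset.subset_univ _) fun x _ hx => by
    rwa [Finsupp.notMem_support_iff] at hx

lemma degree_tsub_single {α : Fin d →₀ ℕ} {i : Fin d} (h : α i ≠ 0) :
    (α - Finsupp.single i 1).degree = α.degree - 1 := by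
  rw [degree_eq_sum_univ, degree_eq_sum_univ]
  have hle : ∀ j ∈ Finset.univ, (Finsupp.single i 1 : Fin d →₀ ℕ) j ≤ α j := by
    intro j _
    rcases eq_or_ne j i with rfl | hne
    · rw [Finsupp.single_eq_same]; omega
    · rw [Finsupp.single_eq_of_ne' (Ne.symm hne)]; exact Nat.zero_le _
  calc ∑ j, ((α - Finsupp.single i 1 : Fin d →₀ ℕ)) j
      = ∑ j, (α j - (Finsupp.single i 1 : Fin d →₀ ℕ) j) :=
        Finset.sum_congr rfl fun j _ => Finsupp.tsub_apply _ _ _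
    _ = (∑ j, α j) - ∑ j, (Finsupp.single i 1 : Fin d →₀ ℕ) j :=
        Finset.sum_tsub_distrib _ hle
    _ = (∑ j, α j) - 1 := by
        rw [Finset.sum_eq_single_of_mem i (Finset.mem_univ i)
          (fun b _ hb => Finsupp.single_eq_of_ne' (Ne.symm hb)), Finsupp.single_eq_same]

lemma isHom_pderiv {p : MvPolynomial (Fin d) ℂ} {m : ℕ} (h : p.IsHomogeneous m) (i : Fin d) :
    (pderiv i p).IsHomogeneous (m - 1) := by
  rw [p.as_sum, map_sum]
  apply IsHomogeneous.sum
  intro α hα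
  rw [pderiv_monomial]
  rcases eq_or_ne (α i) 0 with h0 | h0
  · rw [h0, Nat.cast_zero, mul_zero, monomial_zero]
    exact isHomogeneous_zero _ _ _
  · apply isHomogeneous_monomial
    rw [degree_tsub_single h0]
    have : α.degree = m := by
      have hc := mem_support_iff.mp hα
      have := h hc
      rw [Finsupp.degree_eq_weight_one]; exact this
    rw [this]

lemma isHom_pderiv_pow {p : MvPolynomial (Fin d) ℂ} {m : ℕ} (h : p.IsHomogeneous m)
    (i : Fin d) (t : ℕ) :
    (((pderiv i).toLinearMap ^ t : Module.End ℂ (MvPolynomial (Fin d) ℂ)) p).IsHomogeneous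
      (m - t) := by
  induction t generalizing p m with
  | zero => simpa using h
  | succ t ih =>
    rw [pow_succ, Module.End.mul_apply]
    have := ih (isHom_pderiv h i)
    rwa [Nat.sub_sub, Nat.add_comm 1 t, ← Nat.sub_sub] at this
    -- goal juggling below if needed

lemma isHom_phi_prod (α : Fin d →₀ ℕ) (s : Finset (Fin d)) :
    ∀ {p : MvPolynomial (Fin d) ℂ} {m : ℕ}, p.IsHomogeneous m →
      (phi (∏ i ∈ s, (X i : MvPolynomial (Fin d) ℂ) ^ α i) p).IsHomogeneous
        (m - ∑ i ∈ s, α i) := by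
  classical
  induction s using Finset.induction with
  | empty => intro p m hp; simpa [phi_one] using hp
  | @insert j s hj ih =>
    intro p m hp
    rw [Finset.prod_insert hj, Finset.sum_insert hj, phi_mul, Module.End.mul_apply, phi_pow_X]
    have h1 := ih hp
    have h2 := isHom_pderiv_pow h1 j (α j)
    rwa [Nat.sub_sub, Nat.add_comm (∑ i ∈ s, α i) (α j)] at h2

lemma isHom_partialPow (α : Fin d →₀ ℕ) {p : MvPolynomial (Fin d) ℂ} {m : ℕ}
    (hp : p.IsHomogeneous m) : (partialPow α p).IsHomogeneous (m - α.degree) := by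
  have h1 : partialPow α = phi (monomial α 1) := by rw [phi_monomial, one_smul]
  have h2 : (monomial α (1 : ℂ)) = ∏ i ∈ α.support, (X i : MvPolynomial (Fin d) ℂ) ^ α i := by
    rw [monomial_eq, map_one, one_mul, Finsupp.prod]
  rw [h1, h2]
  have := isHom_phi_prod α α.support hp
  rwa [show ∑ i ∈ α.support, α i = α.degree from rfl] at this

lemma isHom_compU (A : Matrix (Fin d) (Fin d) ℂ) {p : MvPolynomial (Fin d) ℂ} {n : ℕ}
    (hp : p.IsHomogeneous n) : (compU A p).IsHomogeneous n := by
  rw [p.as_sum, show compU A (∑ v ∈ p.support, monomial v (coeff v p))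
    = ∑ v ∈ p.support, compU A (monomial v (coeff v p)) from map_sum _ _ _]
  apply IsHomogeneous.sum
  intro α hα
  rw [monomial_eq, compU_mul, compU_C, Finsupp.prod,
    show compU A (∏ i ∈ α.support, (X i : MvPolynomial (Fin d) ℂ) ^ α i)
      = ∏ i ∈ α.support, compU A ((X i : MvPolynomial (Fin d) ℂ) ^ α i) from map_prod _ _ _]
  have hdeg : α.degree = n := by
    have := hp (mem_support_iff.mp hα)
    rw [Finsupp.degree_eq_weight_one]; exact this
  rw [← hdeg]
  apply IsHomogeneous.C_mul
  rw [Finsupp.degree]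
  apply IsHomogeneous.prod
  intro i _
  rw [show compU A ((X i : MvPolynomial (Fin d) ℂ) ^ α i)
    = (compU A (X i)) ^ α i from map_pow (aeval _) _ _, compU_X]
  have h1 : (∑ j, A i j • (X j : MvPolynomial (Fin d) ℂ)).IsHomogeneous 1 := by
    apply IsHomogeneous.sum
    intro j _
    rw [smul_eq_C_mul]
    exact isHomogeneous_C_mul_X _ _
  simpa using h1.pow (α i)

end Homog

/-! ### Chain rule and intertwining -/

section Intertwine

variable {d : ℕ}

lemma compU_zero (A : Matrix (Fin d) (Fin d) ℂ) : compU A (0 : MvPolynomial (Fin d) ℂ) = 0 :=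
  map_zero (aeval _)

lemma pderiv_compU (A : Matrix (Fin d) (Fin d) ℂ) (j : Fin d) (g : MvPolynomial (Fin d) ℂ) :
    pderiv j (compU A g) = ∑ i, A i j • compU A (pderiv i g) := by
  induction g using MvPolynomial.induction_on with
  | C c => simp [compU_C, compU_zero]
  | add p q hp hq =>
    rw [compU_add, map_add, hp, hq, ← Finset.sum_add_distrib]
    exact Finset.sum_congr rfl fun i _ => by rw [map_add, compU_add, smul_add]
  | mul_X p m ih =>
    have hXd : ∀ a b : Fin d, pderiv a (X b : MvPolynomial (Fin d) ℂ)
        = if a = b then 1 else 0 := by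
      intro a b
      rcases eq_or_ne a b with rfl | h
      · simp
      · simp [pderiv_X_of_ne h.symm, h]
    have h1 : pderiv j (∑ l, A m l • (X l : MvPolynomial (Fin d) ℂ)) = A m j • 1 := by
      rw [map_sum]
      simp only [Derivation.map_smul, hXd, smul_ite, smul_zero]
      rw [Finset.sum_ite_eq Finset.univ j fun l => A m l • (1 : MvPolynomial (Fin d) ℂ),
        if_pos (Finset.mem_univ j)]
    rw [compU_mul, pderiv_mul, ih, compU_X, h1]
    simp only [pderiv_mul, hXd, mul_ite, mul_one, mul_zero, compU_add, compU_mul, compU_X,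
      apply_ite (compU A), compU_zero, smul_add, Finset.sum_add_distrib, smul_ite, smul_zero]
    rw [Finset.sum_ite_eq' Finset.univ m fun i => A i j • compU A p,
      if_pos (Finset.mem_univ m)]
    simp only [Finset.sum_mul, smul_mul_assoc, mul_smul_comm, mul_one]
    try ring

lemma sum_conj_pderiv (U : Matrix (Fin d) (Fin d) ℂ) (hU : U ∈ Matrix.unitaryGroup (Fin d) ℂ)
    (i : Fin d) (g : MvPolynomial (Fin d) ℂ) :
    ∑ j, (starRingEnd ℂ) (U i j) • pderiv j (compU U g) = compU U (pderiv i g) := by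
  have hU2 : U * star U = 1 := (Unitary.mem_iff.mp hU).2
  simp_rw [pderiv_compU U, Finset.smul_sum]
  rw [Finset.sum_comm]
  have hrow : ∀ k, (∑ j, (starRingEnd ℂ) (U i j) • (U k j • compU U (pderiv k g)))
      = (if k = i then (1 : ℂ) else 0) • compU U (pderiv k g) := by
    intro k
    simp_rw [smul_smul]
    rw [← Finset.sum_smul]
    congr 1
    have heq : ∑ j, (starRingEnd ℂ) (U i j) * U k j = (U * star U) k i := by
      rw [Matrix.mul_apply]
      exact Finset.sum_congr rfl fun j _ => by
        rw [Matrix.star_apply, starRingEnd_apply, mul_comm]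
    rw [heq, hU2, Matrix.one_apply]
  calc ∑ k, ∑ j, (starRingEnd ℂ) (U i j) • (U k j • compU U (pderiv k g))
      = ∑ k, (if k = i then (1 : ℂ) else 0) • compU U (pderiv k g) :=
        Finset.sum_congr rfl fun k _ => hrow k
    _ = compU U (pderiv i g) := by
        simp [ite_smul, Finset.sum_ite_eq']

end Intertwine

section Main

variable {d : ℕ}

lemma phi_intertwine (U : Matrix (Fin d) (Fin d) ℂ) (hU : U ∈ Matrix.unitaryGroup (Fin d) ℂ)
    (p : MvPolynomial (Fin d) ℂ) :
    phi (compU (U.map (starRingEnd ℂ)) p) * CUlin U = CUlin U * phi p := by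
  induction p using MvPolynomial.induction_on with
  | C c =>
    rw [compU_C, phi_C, smul_mul_assoc, one_mul, mul_smul_comm, mul_one]
  | add p q hp hq => rw [compU_add, phi_add, phi_add, add_mul, mul_add, hp, hq]
  | mul_X p m ih =>
    rw [compU_mul, phi_mul, compU_X, phi_finset_sum]
    have hE : (∑ j, phi ((U.map (starRingEnd ℂ)) m j • (X j : MvPolynomial (Fin d) ℂ)))
        * CUlin U = CUlin U * (pderiv m).toLinearMap := by
      apply LinearMap.ext
      intro g
      simp only [phi_smul, phi_X, Module.End.mul_apply, LinearMap.sum_apply,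
        LinearMap.smul_apply, Matrix.map_apply]
      exact sum_conj_pderiv U hU m g
    rw [mul_assoc, hE, ← mul_assoc, ih, mul_assoc, phi_mul, phi_X]

lemma annOp_intertwine (U : Matrix (Fin d) (Fin d) ℂ) (hU : U ∈ Matrix.unitaryGroup (Fin d) ℂ)
    (f : MvPolynomial (Fin d) ℂ) :
    annOp (compU U f) * CUlin U = CUlin U * annOp f := by
  rw [annOp_eq_phi, annOp_eq_phi, map_conj_compU, phi_intertwine U hU]

lemma Tf_intertwine (U : Matrix (Fin d) (Fin d) ℂ) (hU : U ∈ Matrix.unitaryGroup (Fin d) ℂ)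
    (f : MvPolynomial (Fin d) ℂ) :
    Tf (compU U f) * CUlin U = CUlin U * Tf f := by
  have hmul : LinearMap.mulLeft ℂ (compU U f) * CUlin U = CUlin U * LinearMap.mulLeft ℂ f :=
    LinearMap.ext fun g => by
      simp only [Module.End.mul_apply, LinearMap.mulLeft_apply, CUlin_apply]
      exact (compU_mul U f g).symm
  have hT : ∀ h : MvPolynomial (Fin d) ℂ, Tf h = annOp h * LinearMap.mulLeft ℂ h := fun h => rfl
  rw [hT, hT, mul_assoc, hmul, ← mul_assoc, annOp_intertwine U hU, mul_assoc]

lemma isHom_annOp_apply {n k : ℕ} {f g : MvPolynomial (Fin d) ℂ} (hf : f.IsHomogeneous n)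
    (hg : g.IsHomogeneous (n + k)) : (annOp f g).IsHomogeneous k := by
  rw [annOp, LinearMap.sum_apply]
  apply IsHomogeneous.sum
  intro α hα
  rw [LinearMap.smul_apply]
  have hdeg : α.degree = n := by
    have := hf (mem_support_iff.mp hα)
    rw [Finsupp.degree_eq_weight_one]; exact this
  have := isHom_partialPow α hg
  rw [hdeg, Nat.add_sub_cancel_left] at this
  exact (mem_homogeneousSubmodule _ _).mp
    ((homogeneousSubmodule (Fin d) ℂ k).smul_mem _ ((mem_homogeneousSubmodule _ _).mpr this))

lemma isHom_Tf {n k : ℕ} {f g : MvPolynomial (Fin d) ℂ} (hf : f.IsHomogeneous n)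
    (hg : g.IsHomogeneous k) : (Tf f g).IsHomogeneous k := by
  have h1 : Tf f g = annOp f (f * g) := rfl
  rw [h1]
  exact isHom_annOp_apply hf (hf.mul hg)

end Main


/-- Generic charpoly-invariance under an intertwining invertible pair. -/
lemma charpoly_conj_aux {K M : Type*} [Field K] [AddCommGroup M] [Module K M]
    (p : Submodule K M) [Module.Finite K p]
    (T T' V W : Module.End K M)
    (hWV : ∀ g, W (V g) = g) (hVW : ∀ g, V (W g) = g)
    (hint : ∀ g, T' (V g) = V (T g))
    (hT' : ∀ g ∈ p, T' g ∈ p) (hT : ∀ g ∈ p, T g ∈ p)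
    (hV : ∀ g ∈ p, V g ∈ p) (hW : ∀ g ∈ p, W g ∈ p) :
    (T'.restrict hT').charpoly = (T.restrict hT).charpoly := by
  let e : p ≃ₗ[K] p := LinearEquiv.ofLinear (V.restrict hV) (W.restrict hW)
    (LinearMap.ext fun x => Subtype.ext (by
      simp only [LinearMap.comp_apply, LinearMap.restrict_coe_apply, LinearMap.id_apply]
      exact hVW x))
    (LinearMap.ext fun x => Subtype.ext (by
      simp only [LinearMap.comp_apply, LinearMap.restrict_coe_apply, LinearMap.id_apply]
      exact hWV x))
  have key : T'.restrict hT' = e.conj (T.restrict hT) := by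
    apply LinearMap.ext
    intro x
    apply Subtype.ext
    simp only [e, LinearEquiv.conj_apply, LinearMap.comp_apply, LinearEquiv.coe_coe,
      LinearEquiv.ofLinear_apply, LinearEquiv.ofLinear_symm_apply, LinearMap.restrict_coe_apply]
    calc T' (x : M) = T' (V (W (x : M))) := by rw [hVW]
      _ = V (T (W (x : M))) := hint _
  rw [key, LinearEquiv.charpoly_conj]

theorem charpoly_Tf_compU_eq (d n : ℕ) (f : MvPolynomial (Fin d) ℂ) (hf : f.IsHomogeneous n)
    (U : Matrix (Fin d) (Fin d) ℂ) (hU : U ∈ Matrix.unitaryGroup (Fin d) ℂ) (k : ℕ) :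
    ∃ (h₁ : ∀ g ∈ homogeneousSubmodule (Fin d) ℂ k,
        Tf (compU U f) g ∈ homogeneousSubmodule (Fin d) ℂ k)
      (h₂ : ∀ g ∈ homogeneousSubmodule (Fin d) ℂ k,
        Tf f g ∈ homogeneousSubmodule (Fin d) ℂ k),
      ((Tf (compU U f)).restrict h₁).charpoly = ((Tf f).restrict h₂).charpoly := by
  classical
  have hfU : (compU U f).IsHomogeneous n := isHom_compU U hf
  have h₁ : ∀ g ∈ homogeneousSubmodule (Fin d) ℂ k,
      Tf (compU U f) g ∈ homogeneousSubmodule (Fin d) ℂ k := fun g hg =>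
    (mem_homogeneousSubmodule _ _).mpr (isHom_Tf hfU ((mem_homogeneousSubmodule _ _).mp hg))
  have h₂ : ∀ g ∈ homogeneousSubmodule (Fin d) ℂ k,
      Tf f g ∈ homogeneousSubmodule (Fin d) ℂ k := fun g hg =>
    (mem_homogeneousSubmodule _ _).mpr (isHom_Tf hf ((mem_homogeneousSubmodule _ _).mp hg))
  have hU1 : star U * U = 1 := (Unitary.mem_iff.mp hU).1
  have hU2 : U * star U = 1 := (Unitary.mem_iff.mp hU).2
  have hWV : ∀ g, CUlin (star U) (CUlin U g) = g := fun g => by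
    rw [CUlin_apply, CUlin_apply, compU_compU, hU2, compU_one]
  have hVW : ∀ g, CUlin U (CUlin (star U) g) = g := fun g => by
    rw [CUlin_apply, CUlin_apply, compU_compU, hU1, compU_one]
  have hint : ∀ g, Tf (compU U f) (CUlin U g) = CUlin U (Tf f g) := fun g => by
    have h := LinearMap.ext_iff.mp (Tf_intertwine U hU f) g
    simpa only [Module.End.mul_apply] using h
  have hV : ∀ g ∈ homogeneousSubmodule (Fin d) ℂ k,
      CUlin U g ∈ homogeneousSubmodule (Fin d) ℂ k := fun g hg =>
    (mem_homogeneousSubmodule _ _).mpr (isHom_compU U ((mem_homogeneousSubmodule _ _).mp hg))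
  have hW : ∀ g ∈ homogeneousSubmodule (Fin d) ℂ k,
      CUlin (star U) g ∈ homogeneousSubmodule (Fin d) ℂ k := fun g hg =>
    (mem_homogeneousSubmodule _ _).mpr
      (isHom_compU (star U) ((mem_homogeneousSubmodule _ _).mp hg))
  exact ⟨h₁, h₂, charpoly_conj_aux (homogeneousSubmodule (Fin d) ℂ k) (Tf f) (Tf (compU U f))
    (CUlin U) (CUlin (star U)) hWV hVW hint h₁ h₂ hV hW⟩
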